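/- Let α : ℝ → ℝ² be a regular C³ plane curve on an open interval I with signed curvature K(t) ≠ 0, let f : I → ℝ be of class C³, and define γ : I → ℝ³ by γ(t) = (α₁(t), α₂(t), f(t)); assume the curvature κ and torsion τ of γ are nonzero at t, and let c₁ = 1/κ and c₂ = −κ'/(‖γ'‖κ²τ) be the focal curvatures of γ, N and B its principal normal and binormal unit vectors. Then the focal curve C_γ(t) = γ(t) + c₁(t)N(t) + c₂(t)B(t) decomposes as C_γ(t) = ι(β(t)) + f̃(t)·e₃, where β(t) = α(t) + [ c₁·( (ṡ² + f'²)·α'' − ½(d/dt)(ṡ² + f'²)·α' ) − c₂·√(ṡ² + f'²)·J(f''·α' − f'·α'') ] / [ √(ṡ² + f'²)·√(ṡ⁶K² + ‖f''·α' − f'·α''‖²) ] and f̃(t) = f(t) + [ c₁·( f''·ṡ² − f'·(d/dt)(ṡ²/2) ) + c₂·√(ṡ² + f'²)·ṡ³K ] / [ √(ṡ² + f'²)·√(ṡ⁶K² + ‖f''·α' − f'·α''‖²) ], with ṡ(t) = ‖α'(t)‖, ι : ℝ² → ℝ³ the embedding ι(p₁,p₂) = (p₁,p₂,0), and e₃ =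 (0,0,1). -/

import Mathlib

open scoped RealInnerProductSpace

noncomputable section

/-- The Euclidean plane `ℝ²`. -/
abbrev E2 := EuclideanSpace ℝ (Fin 2)
/-- Euclidean 3-space `ℝ³`. -/
abbrev E3 := EuclideanSpace ℝ (Fin 3)

/-- The point `(a, b)` of `ℝ²`. -/
def mk2 (a b : ℝ) : E2 := (WithLp.equiv 2 (Fin 2 → ℝ)).symm ![a, b]
/-- The point `(a, b, c)` of `ℝ³`. -/
def mk3 (a b c : ℝ) : E3 := (WithLp.equiv 2 (Fin 3 → ℝ)).symm ![a, b, c]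

/-- The complex structure `J(p₁, p₂) = (-p₂, p₁)`, rotation by `π/2` counterclockwise. -/
def Jc (v : E2) : E2 := mk2 (-(v 1)) (v 0)
/-- The embedding `ι : ℝ² → ℝ³`, `ι(p₁, p₂) = (p₁, p₂, 0)`. -/
def emb (v : E2) : E3 := mk3 (v 0) (v 1) 0
/-- The unit vector `e₃ = (0, 0, 1)`. -/
def e₃ : E3 := mk3 0 0 1
/-- The cross product in `ℝ³`. -/
def cross3 (u v : E3) : E3 :=
  mk3 (u 1 * v 2 - u 2 * v 1) (u 2 * v 0 - u 0 * v 2) (u 0 * v 1 - u 1 * v 0)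

lemma mk3_app0 (a b c : ℝ) : mk3 a b c 0 = a := rfl
lemma mk3_app1 (a b c : ℝ) : mk3 a b c 1 = b := rfl
lemma mk3_app2 (a b c : ℝ) : mk3 a b c 2 = c := rfl
lemma mk2_app0 (a b : ℝ) : mk2 a b 0 = a := rfl
lemma mk2_app1 (a b : ℝ) : mk2 a b 1 = b := rfl
lemma Jc_app0 (v : E2) : Jc v 0 = -(v 1) := rfl
lemma Jc_app1 (v : E2) : Jc v 1 = v 0 := rfl
lemma emb_app0 (v : E2) : emb v 0 = v 0 := rfl
lemma emb_app1 (v : E2) : emb v 1 = v 1 := rfl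
lemma emb_app2 (v : E2) : emb v 2 = 0 := rfl
lemma e3_app0 : e₃ 0 = 0 := rfl
lemma e3_app1 : e₃ 1 = 0 := rfl
lemma e3_app2 : e₃ 2 = 1 := rfl
lemma cross3_app0 (u v : E3) : cross3 u v 0 = u 1 * v 2 - u 2 * v 1 := rfl
lemma cross3_app1 (u v : E3) : cross3 u v 1 = u 2 * v 0 - u 0 * v 2 := rfl
lemma cross3_app2 (u v : E3) : cross3 u v 2 = u 0 * v 1 - u 1 * v 0 := rfl

lemma hasDerivAt_mk3 {g₀ g₁ g₂ : ℝ → ℝ} {d₀ d₁ d₂ : ℝ} {u : ℝ}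
    (h₀ : HasDerivAt g₀ d₀ u) (h₁ : HasDerivAt g₁ d₁ u) (h₂ : HasDerivAt g₂ d₂ u) :
    HasDerivAt (fun x => mk3 (g₀ x) (g₁ x) (g₂ x)) (mk3 d₀ d₁ d₂) u := by
  have hΦ : HasDerivAt (fun x => ![g₀ x, g₁ x, g₂ x]) ![d₀, d₁, d₂] u := by
    rw [hasDerivAt_pi]; intro i; fin_cases i <;> simpa
  exact ((PiLp.continuousLinearEquiv 2 ℝ (fun _ : Fin 3 => ℝ)).symm :
    (Fin 3 → ℝ) →L[ℝ] E3).hasFDerivAt.comp_hasDerivAt u hΦ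

lemma norm_mk3 (a b c : ℝ) : ‖mk3 a b c‖ = Real.sqrt (a^2 + b^2 + c^2) := by
  rw [EuclideanSpace.norm_eq]
  simp [mk3, Fin.sum_univ_three, Real.norm_eq_abs, sq_abs]

lemma norm_sq_E2 (x : E2) : ‖x‖^2 = x 0 ^ 2 + x 1 ^ 2 := by
  rw [EuclideanSpace.norm_eq, Real.sq_sqrt (by positivity)]
  simp [Fin.sum_univ_two, Real.norm_eq_abs, sq_abs]

lemma hasDerivAt_comp_proj {u : ℝ → E2} {du : E2} {x : ℝ} (h : HasDerivAt u du x) (i : Fin 2) :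
    HasDerivAt (fun s => u s i) (du i) x :=
  (EuclideanSpace.proj i : E2 →L[ℝ] ℝ).hasFDerivAt.comp_hasDerivAt x h


set_option maxHeartbeats 2000000 in
/-- The focal curve `C_γ = γ + c₁N + c₂B` of the cylindrical curve
`γ(t) = (α₁(t), α₂(t), f(t))` decomposes as `C_γ(t) = ι(β(t)) + f̃(t)·e₃`, where `β` is the
generalized focal curve of `α` and `f̃` the corresponding height function, both given by
explicit formulas in terms of `α`, `f`, the signed curvature `K` of `α`, the focal curvatures
`c₁, c₂` and `ṡ = ‖α'‖`. -/
theorem focal_curve_of_cylindrical_curve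
    (I : Set ℝ) (hIopen : IsOpen I) (hIconn : I.OrdConnected)
    (α : ℝ → E2) (f : ℝ → ℝ) (γ : ℝ → E3) (K : ℝ → ℝ) (κ : ℝ → ℝ) (τ : ℝ → ℝ)
    (hα : ContDiffOn ℝ 3 α I) (hreg : ∀ t ∈ I, deriv α t ≠ 0)
    (hK : ∀ t ∈ I, K t = ⟪deriv (deriv α) t, Jc (deriv α t)⟫ / ‖deriv α t‖ ^ 3)
    (hK0 : ∀ t ∈ I, K t ≠ 0)
    (hf : ContDiffOn ℝ 3 f I)
    (hγ : ∀ t, γ t = mk3 (α t 0) (α t 1) (f t))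
    (hκ : ∀ u, κ u = ‖cross3 (deriv γ u) (deriv (deriv γ) u)‖ / ‖deriv γ u‖ ^ 3)
    (hτ : ∀ u, τ u =
      ⟪cross3 (deriv γ u) (deriv (deriv γ) u), deriv (deriv (deriv γ)) u⟫ /
        ‖cross3 (deriv γ u) (deriv (deriv γ) u)‖ ^ 2)
    (t : ℝ) (ht : t ∈ I) (hκ0 : κ t ≠ 0) (hτ0 : τ t ≠ 0)
    (T B N : E3) (c₁ c₂ : ℝ)
    (hT : T = ‖deriv γ t‖⁻¹ • deriv γ t)
    (hB : B = ‖cross3 (deriv γ t) (deriv (deriv γ) t)‖⁻¹ •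
      cross3 (deriv γ t) (deriv (deriv γ) t))
    (hN : N = cross3 B T)
    (hc₁ : c₁ = (κ t)⁻¹)
    (hc₂ : c₂ = -deriv κ t / (‖deriv γ t‖ * κ t ^ 2 * τ t))
    (β : E2) (ftilde : ℝ)
    (hβ : β = α t +
      (Real.sqrt (‖deriv α t‖ ^ 2 + deriv f t ^ 2) *
          Real.sqrt (‖deriv α t‖ ^ 6 * K t ^ 2 +
            ‖deriv (deriv f) t • deriv α t - deriv f t • deriv (deriv α) t‖ ^ 2))⁻¹ •
        (c₁ • ((‖deriv α t‖ ^ 2 + deriv f t ^ 2) • deriv (deriv α) t -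
            (1 / 2 * deriv (fun u => ‖deriv α u‖ ^ 2 + deriv f u ^ 2) t) • deriv α t) -
          (c₂ * Real.sqrt (‖deriv α t‖ ^ 2 + deriv f t ^ 2)) •
            Jc (deriv (deriv f) t • deriv α t - deriv f t • deriv (deriv α) t)))
    (hftilde : ftilde = f t +
      (c₁ * (deriv (deriv f) t * ‖deriv α t‖ ^ 2 -
          deriv f t * deriv (fun u => ‖deriv α u‖ ^ 2 / 2) t) +
        c₂ * Real.sqrt (‖deriv α t‖ ^ 2 + deriv f t ^ 2) * ‖deriv α t‖ ^ 3 * K t) /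
      (Real.sqrt (‖deriv α t‖ ^ 2 + deriv f t ^ 2) *
        Real.sqrt (‖deriv α t‖ ^ 6 * K t ^ 2 +
          ‖deriv (deriv f) t • deriv α t - deriv f t • deriv (deriv α) t‖ ^ 2))) :
    γ t + c₁ • N + c₂ • B = emb β + ftilde • e₃ := by
  have hmem : I ∈ nhds t := hIopen.mem_nhds ht
  -- abbreviations (as plain terms)
  set a0 := deriv α t 0 with ha0
  set a1 := deriv α t 1 with ha1
  set b0 := deriv (deriv α) t 0 with hb0
  set b1 := deriv (deriv α) t 1 with hb1
  set p := deriv f t with hp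
  set q := deriv (deriv f) t with hq
  -- differentiability
  have hα1 : ∀ u ∈ I, HasDerivAt α (deriv α u) u := fun u hu =>
    ((hα.differentiableOn (by norm_num)).differentiableAt (hIopen.mem_nhds hu)).hasDerivAt
  have hf1 : ∀ u ∈ I, HasDerivAt f (deriv f u) u := fun u hu =>
    ((hf.differentiableOn (by norm_num)).differentiableAt (hIopen.mem_nhds hu)).hasDerivAt
  have hαd : ContDiffOn ℝ 2 (deriv α) I := hα.deriv_of_isOpen hIopen (by norm_num)
  have hfd : ContDiffOn ℝ 2 (deriv f) I := hf.deriv_of_isOpen hIopen (by norm_num)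
  have hα2 : HasDerivAt (deriv α) (deriv (deriv α) t) t :=
    ((hαd.differentiableOn (by norm_num)).differentiableAt hmem).hasDerivAt
  have hf2 : HasDerivAt (deriv f) q t :=
    ((hfd.differentiableOn (by norm_num)).differentiableAt hmem).hasDerivAt
  -- derivatives of γ
  have hγ1 : ∀ u ∈ I, HasDerivAt γ (mk3 (deriv α u 0) (deriv α u 1) (deriv f u)) u := by
    intro u hu
    have : HasDerivAt (fun x => mk3 (α x 0) (α x 1) (f x))
        (mk3 (deriv α u 0) (deriv α u 1) (deriv f u)) u :=
      hasDerivAt_mk3 (hasDerivAt_comp_proj (hα1 u hu) 0)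
        (hasDerivAt_comp_proj (hα1 u hu) 1) (hf1 u hu)
    exact (funext hγ : γ = _) ▸ this
  have hdγ : deriv γ t = mk3 a0 a1 p := (hγ1 t ht).deriv
  have hdd : deriv (deriv γ) t = mk3 b0 b1 q := by
    have heq : deriv γ =ᶠ[nhds t] fun u => mk3 (deriv α u 0) (deriv α u 1) (deriv f u) :=
      Filter.eventuallyEq_of_mem hmem (fun u hu => (hγ1 u hu).deriv)
    rw [heq.deriv_eq]
    exact (hasDerivAt_mk3 (hasDerivAt_comp_proj hα2 0)
      (hasDerivAt_comp_proj hα2 1) hf2).deriv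
  -- scalar derivative computations
  have hnormsq : HasDerivAt (fun u => ‖deriv α u‖ ^ 2) (2 * (b0 * a0 + b1 * a1)) t := by
    have h := hα2.inner ℝ hα2
    have h2 : (fun u => (⟪deriv α u, deriv α u⟫ : ℝ)) = fun u => ‖deriv α u‖ ^ 2 := by
      funext u; exact real_inner_self_eq_norm_sq _
    rw [h2] at h
    refine h.congr_deriv ?_
    simp [PiLp.inner_apply, Fin.sum_univ_two, RCLike.inner_apply, conj_trivial]
    ring
  have hD1 : deriv (fun u => ‖deriv α u‖ ^ 2 + deriv f u ^ 2) t
      = 2 * (b0 * a0 + b1 * a1) + 2 * (p * q) := by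
    have h2 : HasDerivAt (fun u => deriv f u ^ 2) (2 * (p * q)) t := by
      have := hf2.pow 2
      refine this.congr_deriv ?_
      simp [← hp]; ring
    exact (hnormsq.add h2).deriv
  have hD2 : deriv (fun u => ‖deriv α u‖ ^ 2 / 2) t = b0 * a0 + b1 * a1 := by
    have := (hnormsq.div_const 2).deriv
    rw [this]; ring
  -- K relations
  have hareg : deriv α t ≠ 0 := hreg t ht
  have hs0 : ‖deriv α t‖ ≠ 0 := norm_ne_zero_iff.2 hareg
  have hna : ‖deriv α t‖ ^ 2 = a0 ^ 2 + a1 ^ 2 := norm_sq_E2 _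
  have hk3 : ‖deriv α t‖ ^ 3 * K t = a0 * b1 - a1 * b0 := by
    rw [hK t ht]
    field_simp
    simp [PiLp.inner_apply, Fin.sum_univ_two, RCLike.inner_apply, conj_trivial,
      Jc_app0, Jc_app1, ← ha0, ← ha1, ← hb0, ← hb1]
    ring
  have hk6 : ‖deriv α t‖ ^ 6 * K t ^ 2 = (a0 * b1 - a1 * b0) ^ 2 := by
    have : ‖deriv α t‖ ^ 6 * K t ^ 2 = (‖deriv α t‖ ^ 3 * K t) ^ 2 := by ring
    rw [this, hk3]
  have hwn : ‖q • deriv α t - p • deriv (deriv α) t‖ ^ 2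
      = (q * a0 - p * b0) ^ 2 + (q * a1 - p * b1) ^ 2 := by
    rw [norm_sq_E2]
    simp [← ha0, ← ha1, ← hb0, ← hb1]
  -- nonvanishing of the two square roots
  have hargD : (0:ℝ) < (a0 ^ 2 + a1 ^ 2) + p ^ 2 := by
    have h1 : 0 < ‖deriv α t‖ ^ 2 := pow_pos (norm_pos_iff.mpr hareg) 2
    rw [hna] at h1; linarith [sq_nonneg p]
  have hk0 : a0 * b1 - a1 * b0 ≠ 0 := by
    intro h
    apply hK0 t ht
    have h6 : ‖deriv α t‖ ^ 6 * K t ^ 2 = 0 := by rw [hk6, h]; ring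
    have hKsq : K t ^ 2 = 0 := by
      rcases mul_eq_zero.1 h6 with h' | h'
      · exact absurd h' (pow_ne_zero 6 hs0)
      · exact h'
    exact pow_eq_zero_iff two_ne_zero |>.1 hKsq
  have hargE : (0:ℝ) < (a0 * b1 - a1 * b0) ^ 2
      + ((q * a0 - p * b0) ^ 2 + (q * a1 - p * b1) ^ 2) := by
    have h2 : 0 < (a0 * b1 - a1 * b0) ^ 2 :=
      lt_of_le_of_ne (sq_nonneg _) (Ne.symm (pow_ne_zero 2 hk0))
    linarith [sq_nonneg (q * a0 - p * b0), sq_nonneg (q * a1 - p * b1)]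
  have hDne : Real.sqrt ((a0 ^ 2 + a1 ^ 2) + p ^ 2) ≠ 0 :=
    Real.sqrt_ne_zero'.mpr hargD
  have hEne : Real.sqrt ((a0 * b1 - a1 * b0) ^ 2
      + ((q * a0 - p * b0) ^ 2 + (q * a1 - p * b1) ^ 2)) ≠ 0 :=
    (Real.sqrt_ne_zero'.mpr hargE)
  -- norms of γ', cross
  have hDnorm : ‖mk3 a0 a1 p‖ = Real.sqrt ((a0 ^ 2 + a1 ^ 2) + p ^ 2) := by
    rw [norm_mk3]
  have hcross : cross3 (mk3 a0 a1 p) (mk3 b0 b1 q)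
      = mk3 (a1 * q - p * b1) (p * b0 - a0 * q) (a0 * b1 - a1 * b0) := rfl
  have hEnorm : ‖cross3 (mk3 a0 a1 p) (mk3 b0 b1 q)‖
      = Real.sqrt ((a0 * b1 - a1 * b0) ^ 2
        + ((q * a0 - p * b0) ^ 2 + (q * a1 - p * b1) ^ 2)) := by
    rw [hcross, norm_mk3]
    congr 1; ring
  -- rewrite ftilde's last K-term
  have hftilde' : ftilde = f t +
      (c₁ * (q * (a0 ^ 2 + a1 ^ 2) - p * (b0 * a0 + b1 * a1)) +
        c₂ * Real.sqrt ((a0 ^ 2 + a1 ^ 2) + p ^ 2) * (a0 * b1 - a1 * b0)) /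
      (Real.sqrt ((a0 ^ 2 + a1 ^ 2) + p ^ 2) *
        Real.sqrt ((a0 * b1 - a1 * b0) ^ 2
          + ((q * a0 - p * b0) ^ 2 + (q * a1 - p * b1) ^ 2))) := by
    rw [hftilde, hD2, mul_assoc (c₂ * _), hk3, hk6, hwn, hna]
  -- main rewrite
  rw [hγ t, hN, hB, hT, hdγ, hdd, hβ, hftilde', hD1, hk6, hwn, hna, hDnorm, hEnorm, hcross]
  ext i
  fin_cases i <;>
  · simp only [Fin.zero_eta, Fin.mk_one, Fin.reduceFinMk, PiLp.add_apply, PiLp.sub_apply, PiLp.smul_apply, smul_eq_mul,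
      mk3_app0, mk3_app1, mk3_app2, mk2_app0, mk2_app1, Jc_app0, Jc_app1,
      emb_app0, emb_app1, emb_app2, e3_app0, e3_app1, e3_app2,
      cross3_app0, cross3_app1, cross3_app2, mul_inv_rev]
    field_simp
    ring
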